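/- If P is a Gorenstein* poset of rank 5, then α13(P) ≤ α1(P) · α3(P). -/

import Mathlib

open scoped Classical

noncomputable section

/-! ### Finite abstract simplicial complexes and simplicial (reduced) homology -/

variable {V : Type} [Fintype V] [DecidableEq V]

/-- `Δ` is an abstract simplicial complex (with the empty face). -/
def IsComplex (Δ : Finset (Finset V)) : Prop :=
  ∅ ∈ Δ ∧ ∀ F ∈ Δ, ∀ G ⊆ F, G ∈ Δ

/-- The link of a face `F` in `Δ`. -/
def linkOf (Δ : Finset (Finset V)) (F : Finset V) : Finset (Finset V) :=
  Finset.univ.filter fun G => G ∩ F = ∅ ∧ G ∪ F ∈ Δ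

/-- The module of (augmented) simplicial `k`-chains: formal `ℤ`-combinations of
subsets of `V` of cardinality `k` (a set of cardinality `k` is a face of dimension `k-1`). -/
abbrev SChain (V : Type) [Fintype V] (k : ℕ) : Type :=
  ({F : Finset V // F.card = k}) →₀ ℤ

/-- The simplicial boundary map, from `(k+1)`-chains to `k`-chains, with signs
determined by a linear order on the vertices. -/
def sBoundary (V : Type) [Fintype V] [DecidableEq V] [LinearOrder V] (k : ℕ) :
    SChain V (k + 1) →ₗ[ℤ] SChain V k :=
  Finsupp.lsum ℤ fun F => LinearMap.toSpanSingleton ℤ _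
    (∑ x ∈ F.1.attach,
      ((-1 : ℤ) ^ (F.1.filter (fun y => y < x.1)).card) •
        Finsupp.single
          (⟨F.1.erase x.1, by simp [Finset.card_erase_of_mem x.2, F.2]⟩ :
            {F : Finset V // F.card = k}) 1)

/-- The chains supported on the faces of `Δ`. -/
def chainsIn (Δ : Finset (Finset V)) (k : ℕ) : Submodule ℤ (SChain V k) :=
  Finsupp.supported ℤ ℤ {F : {F : Finset V // F.card = k} | F.1 ∈ Δ}

/-- Cycles of `Δ` in cardinality-index `k` (dimension `k-1`). -/
def sCycles [LinearOrder V] (Δ : Finset (Finset V)) : (k : ℕ) → Submodule ℤ (SChain V k)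
  | 0 => chainsIn Δ 0
  | (k + 1) => chainsIn Δ (k + 1) ⊓ LinearMap.ker (sBoundary V k)

/-- Boundaries of `Δ` in cardinality-index `k`. -/
def sBdries [LinearOrder V] (Δ : Finset (Finset V)) (k : ℕ) : Submodule ℤ (SChain V k) :=
  Submodule.map (sBoundary V k) (chainsIn Δ (k + 1))

/-- The reduced simplicial homology of `Δ` in dimension `k-1` (cardinality-index `k`). -/
abbrev redHomology [LinearOrder V] (Δ : Finset (Finset V)) (k : ℕ) :=
  (sCycles Δ k) ⧸ (Submodule.comap (sCycles Δ k).subtype (sBdries Δ k))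

/-- `Δ` has the reduced integral homology of a sphere of dimension `m`
(`m = -1` is allowed, for the empty complex `{∅}`). -/
def hasSphereHomology [LinearOrder V] (Δ : Finset (Finset V)) (m : ℤ) : Prop :=
  ∀ k : ℕ, if (k : ℤ) = m + 1 then Nonempty ((redHomology Δ k) ≃ₗ[ℤ] ℤ)
    else Subsingleton (redHomology Δ k)

/-- `Δ` is a homology `m`-sphere: an `m`-dimensional simplicial complex such that the link
of every face `F` (including the empty face) has the reduced integral homology of a sphere
of dimension `m - |F|`.  (Relative to a linear order on `V`, used for orientation signs;
the notion is independent of this choice.) -/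
def IsHomologySphereL [LinearOrder V] (Δ : Finset (Finset V)) (m : ℤ) : Prop :=
  IsComplex Δ ∧ (∀ F ∈ Δ, (F.card : ℤ) ≤ m + 1) ∧ (∃ F ∈ Δ, (F.card : ℤ) = m + 1) ∧
    ∀ F ∈ Δ, hasSphereHomology (linkOf Δ F) (m - F.card)

/-- Some linear order on a finite type. -/
def someLinearOrder (V : Type) [Fintype V] : LinearOrder V :=
  letI := Classical.decEq V
  LinearOrder.lift' (Fintype.equivFin V) (Fintype.equivFin V).injective

/-- `Δ` is a homology sphere of dimension `m`. -/
def IsHomologySphere (Δ : Finset (Finset V)) (m : ℤ) : Prop :=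
  letI := someLinearOrder V
  IsHomologySphereL Δ m

/-- `Δ` is flag: every minimal non-face has at most two vertices. -/
def IsFlagComplex (Δ : Finset (Finset V)) : Prop :=
  ∀ F : Finset V, F ∉ Δ → (∀ G ⊂ F, G ∈ Δ) → F.card ≤ 2

/-- The (stellar) edge subdivision of `Δ` with respect to the edge `{i, j}`,
with new vertex `v`. -/
def edgeSubdiv (Δ : Finset (Finset V)) (i j v : V) : Finset (Finset V) :=
  Δ.filter (fun F => ¬ ({i, j} : Finset V) ⊆ F) ∪
    (linkOf Δ {i, j}).image (fun F => insert v F) ∪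
    (linkOf Δ {i, j}).image (fun F => insert i (insert v F)) ∪
    (linkOf Δ {i, j}).image (fun F => insert j (insert v F))

/-- The edge contraction of `i` to `j` in `Δ`. -/
def edgeContract (Δ : Finset (Finset V)) (i j : V) : Finset (Finset V) :=
  Δ.filter (fun F => i ∉ F) ∪
    (Δ.filter (fun F => i ∈ F)).image fun F => insert j (F.erase i)

/-! ### Finite graded posets -/

/-- A finite graded poset with `⊥` and `⊤`: a finite bounded poset together with a rank
function which is `0` at `⊥` and increases by exactly one along cover relations. -/
structure FinGradedPoset where
  carrier : Type
  [deq : DecidableEq carrier]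
  [fin : Fintype carrier]
  [po : PartialOrder carrier]
  [bo : BoundedOrder carrier]
  rk : carrier → ℕ
  rk_bot : rk ⊥ = 0
  rk_covBy : ∀ a b : carrier, a ⋖ b → rk b = rk a + 1

attribute [instance] FinGradedPoset.deq FinGradedPoset.fin FinGradedPoset.po FinGradedPoset.bo

/-- The rank of a graded poset (so a poset of rank `n+1` has `rank P = n + 1`). -/
def FinGradedPoset.rank (P : FinGradedPoset) : ℕ := P.rk ⊤

/-- The order complex of `P`: the simplicial complex of chains of `P − {⊥, ⊤}`. -/
def orderComplex (P : FinGradedPoset) : Finset (Finset P.carrier) :=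
  Finset.univ.filter fun F =>
    IsChain (· ≤ ·) (↑F : Set P.carrier) ∧ (⊥ : P.carrier) ∉ F ∧ (⊤ : P.carrier) ∉ F

/-- A graded poset is Gorenstein* if its order complex is a homology sphere
of dimension `rank − 2`. -/
def IsGorenstein (P : FinGradedPoset) : Prop :=
  IsHomologySphere (orderComplex P) ((P.rank : ℤ) - 2)

/-! ### Flag `f`- and `h`-vectors, and the cd-index -/

/-- The flag `f`-vector: `flagF P S` is the number of chains of `P − {⊥, ⊤}` whose
set of ranks is `S`. -/
def flagF (P : FinGradedPoset) (S : Finset ℕ) : ℕ :=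
  ((orderComplex P).filter fun F => F.image P.rk = S).card

/-- The flag `h`-vector. -/
def flagH (P : FinGradedPoset) (S : Finset ℕ) : ℤ :=
  ∑ T ∈ S.powerset, (-1 : ℤ) ^ (S.card - T.card) * (flagF P T : ℤ)

/-- The `ab`-monomial `u_S = u_1 ⋯ u_n` with `u_i = b` (encoded `true`) if `i ∈ S` and
`u_i = a` (encoded `false`) otherwise, in the free `ℤ`-algebra on `{a, b}`. -/
def uWord (n : ℕ) (S : Finset ℕ) : FreeAlgebra ℤ Bool :=
  ((List.range n).map fun i =>
    if i + 1 ∈ S then FreeAlgebra.ι ℤ true else FreeAlgebra.ι ℤ false).prod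

/-- The polynomial `Ψ_P(a,b) = Σ_S h_S(P) u_S`, an element of the free `ℤ`-algebra on the
noncommuting variables `a` (encoded `false`) and `b` (encoded `true`). -/
def PsiAB (P : FinGradedPoset) : FreeAlgebra ℤ Bool :=
  ∑ S ∈ (Finset.Icc 1 (P.rank - 1)).powerset, flagH P S • uWord (P.rank - 1) S

/-- Substitution `c ↦ a + b`, `d ↦ ab + ba`, from cd-polynomials (free `ℤ`-algebra on
`{c, d}`, `c` encoded `false` and `d` encoded `true`) to ab-polynomials. -/
def cdToAB : FreeAlgebra ℤ Bool →ₐ[ℤ] FreeAlgebra ℤ Bool :=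
  FreeAlgebra.lift ℤ fun t =>
    if t then
      FreeAlgebra.ι ℤ false * FreeAlgebra.ι ℤ true +
        FreeAlgebra.ι ℤ true * FreeAlgebra.ι ℤ false
    else FreeAlgebra.ι ℤ false + FreeAlgebra.ι ℤ true

/-- `Φ` is the cd-index of `P`: substituting `c = a + b`, `d = ab + ba` into `Φ`
yields `Ψ_P(a,b)`. -/
def IsCdIndex (P : FinGradedPoset) (Φ : FreeAlgebra ℤ Bool) : Prop :=
  cdToAB Φ = PsiAB P

/-- The variable `c` of cd-polynomials. -/
def Cv : FreeAlgebra ℤ Bool := FreeAlgebra.ι ℤ false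
/-- The variable `d` of cd-polynomials. -/
def Dv : FreeAlgebra ℤ Bool := FreeAlgebra.ι ℤ true

/-- The cd-polynomial `c⁴ + α₁ dc² + α₂ cdc + α₃ c²d + α₁₃ d²`. -/
def cdPoly5 (a1 a2 a3 a13 : ℕ) : FreeAlgebra ℤ Bool :=
  Cv ^ 4 + (a1 : ℤ) • (Dv * Cv ^ 2) + (a2 : ℤ) • (Cv * Dv * Cv) +
    (a3 : ℤ) • (Cv ^ 2 * Dv) + (a13 : ℤ) • (Dv * Dv)

/-- Substitution `c = 1` (and `d = X`) into a cd-polynomial; the coefficients of the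
resulting polynomial form the `d`-vector. -/
def evalC1 : FreeAlgebra ℤ Bool →ₐ[ℤ] Polynomial ℤ :=
  FreeAlgebra.lift ℤ fun t => if t then Polynomial.X else 1

/-! ### Zipping and unzipping -/

/-- The zipping hypotheses for `x, y, z ∈ P − {⊥, ⊤}`: (i) `x` covers exactly `y` and `z`,
(ii) `x` is the unique minimal upper bound of `y` and `z`, (iii) `y` and `z` cover exactly
the same elements. -/
def ZipHyp (P : FinGradedPoset) (x y z : P.carrier) : Prop :=
  x ≠ ⊥ ∧ x ≠ ⊤ ∧ y ≠ ⊥ ∧ y ≠ ⊤ ∧ z ≠ ⊥ ∧ z ≠ ⊤ ∧ y ≠ z ∧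
    (∀ w : P.carrier, w ⋖ x ↔ (w = y ∨ w = z)) ∧
    (y ≤ x ∧ z ≤ x ∧ ∀ w : P.carrier, y ≤ w → z ≤ w → x ≤ w) ∧
    (∀ w : P.carrier, w ⋖ y ↔ w ⋖ z)

/-- `Q` is (a copy, via the bijection `e`, of) the zipped poset `Z(P; x, y, z)`:
the underlying set is `P − {x, y}`, the order is the one of `P` together with the
added relations `z < w` for all `w > y`, and the rank function is inherited from `P`. -/
def IsZipOf (P : FinGradedPoset) (x y z : P.carrier) (Q : FinGradedPoset)
    (e : Q.carrier ≃ {w : P.carrier // w ≠ x ∧ w ≠ y}) : Prop :=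
  (∀ a b : Q.carrier, a ≤ b ↔ ((e a).1 ≤ (e b).1 ∨ ((e a).1 = z ∧ y < (e b).1))) ∧
    (∀ a : Q.carrier, Q.rk a = P.rk (e a).1)

/-- `Q` is (a copy of) the unzipped poset `U(P; x, y)`, where `x` covers `y`:
`e` embeds `P` into `Q`, the two elements of `Q` not coming from `P` are
`x'` and `y'`, ranks are inherited (with `rk x' = rk x`, `rk y' = rk y`), the cover
relations of `Q` are exactly those of `P` except `y ⋖ x`, together with
`x' ⋖ w` for all covers `x ⋖ w`, `w ⋖ y'` for all covers `w ⋖ y`, and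
`y' ⋖ x'`, `y ⋖ x'`, `y' ⋖ x`; the order of `Q` is generated by its cover relations. -/
def IsUnzipOf (P : FinGradedPoset) (x y : P.carrier) (Q : FinGradedPoset)
    (e : P.carrier ↪ Q.carrier) (x' y' : Q.carrier) : Prop :=
  x' ≠ y' ∧ (∀ a : P.carrier, e a ≠ x') ∧ (∀ a : P.carrier, e a ≠ y') ∧
    (∀ b : Q.carrier, b = x' ∨ b = y' ∨ ∃ a : P.carrier, b = e a) ∧
    (∀ a : P.carrier, Q.rk (e a) = P.rk a) ∧ Q.rk x' = P.rk x ∧ Q.rk y' = P.rk y ∧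
    (∀ a b : P.carrier, e a ⋖ e b ↔ (a ⋖ b ∧ ¬(a = y ∧ b = x))) ∧
    (∀ b : P.carrier, x' ⋖ e b ↔ x ⋖ b) ∧
    (∀ a : P.carrier, e a ⋖ x' ↔ a = y) ∧
    (∀ a : P.carrier, e a ⋖ y' ↔ a ⋖ y) ∧
    (∀ b : P.carrier, y' ⋖ e b ↔ b = x) ∧
    y' ⋖ x' ∧ ¬ (x' ⋖ y') ∧
    (∀ u v : Q.carrier, u ≤ v ↔ Relation.ReflTransGen (· ⋖ ·) u v)

/-! ### Joins, intervals, and cycles -/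

/-- `R` is (a copy of) the join `P * Q`: the disjoint union of `P − {⊤}` and `Q − {⊥}`,
where every element coming from `P` lies below every element coming from `Q`,
with the appropriate rank function. -/
def IsJoinOf (P Q R : FinGradedPoset) : Prop :=
  ∃ (f : {p : P.carrier // p ≠ ⊤} → R.carrier) (g : {q : Q.carrier // q ≠ ⊥} → R.carrier),
    Function.Injective f ∧ Function.Injective g ∧ (∀ p q, f p ≠ g q) ∧
    (∀ r : R.carrier, (∃ p, r = f p) ∨ (∃ q, r = g q)) ∧
    (∀ p p', f p ≤ f p' ↔ p.1 ≤ p'.1) ∧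
    (∀ q q', g q ≤ g q' ↔ q.1 ≤ q'.1) ∧
    (∀ p q, f p ≤ g q) ∧ (∀ p q, ¬ g q ≤ f p) ∧
    (∀ p, R.rk (f p) = P.rk p.1) ∧ (∀ q, R.rk (g q) = P.rank + Q.rk q.1 - 1)

/-- `P` is (a copy of) the rank-3 graded poset `C_k` obtained by adjoining `⊥` and `⊤`
to the face poset of a cycle of length `k`: its atoms are `k` vertices `v 0, …, v (k-1)`,
its coatoms are `k` edges `e 0, …, e (k-1)`, and the vertices below the edge `e j` are
exactly `v j` and `v ((j+1) % k)`. -/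
def IsCyclePoset (k : ℕ) (P : FinGradedPoset) : Prop :=
  P.rank = 3 ∧
  ∃ v e : ℕ → P.carrier,
    (∀ i < k, ∀ j < k, v i = v j → i = j) ∧
    (∀ i < k, ∀ j < k, e i = e j → i = j) ∧
    (∀ i < k, ∀ j < k, v i ≠ e j) ∧
    (∀ i < k, P.rk (v i) = 1) ∧ (∀ i < k, P.rk (e i) = 2) ∧
    (∀ p : P.carrier, p = ⊥ ∨ p = ⊤ ∨ (∃ i < k, p = v i) ∨ (∃ i < k, p = e i)) ∧
    (∀ i < k, ∀ j < k, (v i < e j ↔ (i = j ∨ i = (j + 1) % k))) ∧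
    (∀ i < k, ∀ j < k, ¬ (e i ≤ v j)) ∧
    (∀ i < k, ∀ j < k, (v i ≤ v j ↔ i = j)) ∧
    (∀ i < k, ∀ j < k, (e i ≤ e j ↔ i = j))

lemma FinGradedPoset.exists_covBy_le (P : FinGradedPoset) {a b : P.carrier} (h : a < b) :
    ∃ c, a ⋖ c ∧ c ≤ b := by
  letI : LocallyFiniteOrder P.carrier := Fintype.toLocallyFiniteOrder
  exact exists_covBy_le_of_lt h

lemma FinGradedPoset.rk_lt_of_lt (P : FinGradedPoset) :
    ∀ a b : P.carrier, a < b → P.rk a < P.rk b := by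
  have wf : WellFounded (fun x y : P.carrier => y < x) := wellFounded_gt
  intro a
  refine WellFounded.induction wf (C := fun x => ∀ b, x < b → P.rk x < P.rk b) a ?_
  intro x ih b hxb
  obtain ⟨c, hxc, hcb⟩ := P.exists_covBy_le hxb
  have h1 := P.rk_covBy x c hxc
  rcases eq_or_lt_of_le hcb with rfl | hlt
  · omega
  · have h2 := ih c hxc.lt b hlt
    omega

lemma FinGradedPoset.rk_le_of_le (P : FinGradedPoset) {a b : P.carrier} (h : a ≤ b) :
    P.rk a ≤ P.rk b := by
  rcases eq_or_lt_of_le h with rfl | hlt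
  · exact le_rfl
  · exact (P.rk_lt_of_lt a b hlt).le

/-- The closed interval `[a, b]` of a graded poset, as a graded poset with
minimal element `a` and maximal element `b`. -/
def intervalPoset (P : FinGradedPoset) (a b : P.carrier) (hab : a ≤ b) : FinGradedPoset where
  carrier := {w : P.carrier // a ≤ w ∧ w ≤ b}
  deq := inferInstance
  fin := Fintype.ofFinite _
  po := inferInstance
  bo :=
    { bot := ⟨a, le_rfl, hab⟩
      top := ⟨b, hab, le_rfl⟩
      le_top := fun w => Subtype.coe_le_coe.mp w.2.2
      bot_le := fun w => Subtype.coe_le_coe.mp w.2.1 }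
  rk := fun w => P.rk w.1 - P.rk a
  rk_bot := Nat.sub_self _
  rk_covBy := by
    rintro ⟨u, hu⟩ ⟨v, hv⟩ h
    have huv : u ⋖ v := by
      refine ⟨Subtype.mk_lt_mk.mp h.lt, fun m hum hmv => ?_⟩
      have ham : a ≤ m := le_trans hu.1 hum.le
      have hmb : m ≤ b := le_trans hmv.le hv.2
      exact h.2 (show (⟨u, hu⟩ : {w : P.carrier // a ≤ w ∧ w ≤ b}) < ⟨m, ham, hmb⟩ from
        Subtype.mk_lt_mk.mpr hum) (Subtype.mk_lt_mk.mpr hmv)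
    have h1 := P.rk_covBy u v huv
    have h2 : P.rk a ≤ P.rk u := P.rk_le_of_le hu.1
    simp only
    omega

/-! ### f-, h- and γ-vectors of simplicial complexes -/

/-- A finite abstract simplicial complex, bundled with its (finite) vertex type. -/
structure FinComplex where
  V : Type
  [deq : DecidableEq V]
  [fin : Fintype V]
  faces : Finset (Finset V)

attribute [instance] FinComplex.deq FinComplex.fin

/-- `Σ_{i=0}^n f_{i-1} (X-1)^{n-i}`, where `f_{i-1}` is the number of faces of
cardinality `i`; this equals `Σ_{i=0}^n h_i X^{n-i}`. -/
def fPoly (K : FinComplex) (n : ℕ) : Polynomial ℤ :=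
  ∑ i ∈ Finset.range (n + 1),
    ((K.faces.filter fun F => F.card = i).card : ℤ) • (Polynomial.X - 1) ^ (n - i)

/-- The `h`-polynomial `Σ_{i=0}^n h_i X^i` of an `(n-1)`-dimensional complex. -/
def hPoly (K : FinComplex) (n : ℕ) : Polynomial ℤ :=
  ∑ i ∈ Finset.range (n + 1), Polynomial.C ((fPoly K n).coeff (n - i)) * Polynomial.X ^ i


/-- for a Gorenstein* poset of rank 5, `α13 ≤ α1 · α3`. -/

def wMat (p : ℕ → Bool) (t : Bool) : Matrix (Fin 5) (Fin 5) ℤ :=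
  Matrix.of fun i j => if (j:ℕ) = (i:ℕ)+1 ∧ p (i:ℕ) = t then 1 else 0

def wHom (p : ℕ → Bool) : FreeAlgebra ℤ Bool →ₐ[ℤ] Matrix (Fin 5) (Fin 5) ℤ :=
  FreeAlgebra.lift ℤ (wMat p)

def CM (p : ℕ → Bool) : Matrix (Fin 5) (Fin 5) ℤ := wMat p false + wMat p true
def DM (p : ℕ → Bool) : Matrix (Fin 5) (Fin 5) ℤ :=
  wMat p false * wMat p true + wMat p true * wMat p false

lemma wHom_cd (p : ℕ → Bool) (a1 a2 a3 a13 : ℕ) :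
    wHom p (cdToAB (cdPoly5 a1 a2 a3 a13)) =
      CM p ^ 4 + (a1:ℤ) • (DM p * CM p ^ 2) + (a2:ℤ) • (CM p * DM p * CM p) +
        (a3:ℤ) • (CM p ^ 2 * DM p) + (a13:ℤ) • (DM p * DM p) := by
  simp [cdPoly5, Cv, Dv, cdToAB, wHom, CM, DM, map_add, map_pow, map_mul, map_smul,
    FreeAlgebra.lift_ι_apply, add_comm]

lemma uWord_four (S : Finset ℕ) :
    uWord 4 S =
      (if 1 ∈ S then FreeAlgebra.ι ℤ true else FreeAlgebra.ι ℤ false) *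
      ((if 2 ∈ S then FreeAlgebra.ι ℤ true else FreeAlgebra.ι ℤ false) *
      ((if 3 ∈ S then FreeAlgebra.ι ℤ true else FreeAlgebra.ι ℤ false) *
      (if 4 ∈ S then FreeAlgebra.ι ℤ true else FreeAlgebra.ι ℤ false))) := by
  show (List.map _ [0,1,2,3]).prod = _
  simp [mul_assoc]

lemma wHom_uWord (p : ℕ → Bool) (S : Finset ℕ) :
    wHom p (uWord 4 S) =
      (if 1 ∈ S then wMat p true else wMat p false) *
      ((if 2 ∈ S then wMat p true else wMat p false) *
      ((if 3 ∈ S then wMat p true else wMat p false) *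
      (if 4 ∈ S then wMat p true else wMat p false))) := by
  rw [uWord_four]
  simp [wHom, apply_ite (wHom p), map_mul, FreeAlgebra.lift_ι_apply]
  split_ifs <;> simp [map_mul, FreeAlgebra.lift_ι_apply]
lemma mem_orderComplex_of_subset (P : FinGradedPoset) {F G : Finset P.carrier}
    (hF : F ∈ orderComplex P) (hGF : G ⊆ F) : G ∈ orderComplex P := by
  simp only [orderComplex, Finset.mem_filter, Finset.mem_univ, true_and] at hF ⊢
  exact ⟨hF.1.mono (by exact_mod_cast hGF), fun h => hF.2.1 (hGF h), fun h => hF.2.2 (hGF h)⟩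

lemma flagF_empty (P : FinGradedPoset) : flagF P ∅ = 1 := by
  have h1 : (orderComplex P).filter (fun F => F.image P.rk = ∅) = {∅} := by
    ext F
    simp only [Finset.mem_filter, Finset.image_eq_empty, Finset.mem_singleton]
    constructor
    · rintro ⟨-, h⟩; exact h
    · rintro rfl
      refine ⟨?_, rfl⟩
      simp only [orderComplex, Finset.mem_filter, Finset.mem_univ, true_and]
      exact ⟨by simp [IsChain], by simp, by simp⟩
  rw [flagF, h1, Finset.card_singleton]

lemma chain_subset_Icc (P : FinGradedPoset) (hr : P.rank = 5) {F : Finset P.carrier}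
    (hF : F ∈ orderComplex P) : F.image P.rk ⊆ Finset.Icc 1 4 := by
  simp only [orderComplex, Finset.mem_filter, Finset.mem_univ, true_and] at hF
  intro n hn
  simp only [Finset.mem_image] at hn
  obtain ⟨x, hxF, rfl⟩ := hn
  have hb : (⊥ : P.carrier) < x := by
    rcases eq_or_lt_of_le (bot_le : (⊥ : P.carrier) ≤ x) with h | h
    · exact absurd (h ▸ hxF) hF.2.1
    · exact h
  have ht : x < (⊤ : P.carrier) := by
    rcases eq_or_lt_of_le (le_top : x ≤ (⊤ : P.carrier)) with h | h
    · exact absurd (h ▸ hxF) hF.2.2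
    · exact h
  have h1 := P.rk_lt_of_lt _ _ hb
  have h2 := P.rk_lt_of_lt _ _ ht
  rw [P.rk_bot] at h1
  have : P.rk ⊤ = 5 := hr
  simp only [Finset.mem_Icc]
  omega
lemma flagF_pair_le (P : FinGradedPoset) :
    flagF P {1, 4} ≤ flagF P {1} * flagF P {4} := by
  classical
  set T14 := (orderComplex P).filter (fun F => F.image P.rk = {1, 4}) with hT14
  set T1 := (orderComplex P).filter (fun F => F.image P.rk = {1}) with hT1
  set T4 := (orderComplex P).filter (fun F => F.image P.rk = {4}) with hT4
  have key : T14.card ≤ (T1 ×ˢ T4).card := by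
    apply Finset.card_le_card_of_injOn
      (fun F => (F.filter (fun x => P.rk x = 1), F.filter (fun x => P.rk x = 4)))
    · intro F hF
      simp only [Finset.mem_coe, hT14, Finset.mem_filter] at hF
      obtain ⟨hFo, hFi⟩ := hF
      have him1 : (F.filter (fun x => P.rk x = 1)).image P.rk = {1} := by
        apply subset_antisymm
        · intro n hn
          simp only [Finset.mem_image, Finset.mem_filter] at hn
          obtain ⟨x, ⟨-, hx1⟩, rfl⟩ := hn
          simp [hx1]
        · intro n hn
          simp only [Finset.mem_singleton] at hn
          subst hn
          have : (1 : ℕ) ∈ F.image P.rk := by rw [hFi]; simp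
          simp only [Finset.mem_image] at this
          obtain ⟨x, hx, hx1⟩ := this
          exact Finset.mem_image.2 ⟨x, Finset.mem_filter.2 ⟨hx, hx1⟩, hx1⟩
      have him4 : (F.filter (fun x => P.rk x = 4)).image P.rk = {4} := by
        apply subset_antisymm
        · intro n hn
          simp only [Finset.mem_image, Finset.mem_filter] at hn
          obtain ⟨x, ⟨-, hx1⟩, rfl⟩ := hn
          simp [hx1]
        · intro n hn
          simp only [Finset.mem_singleton] at hn
          subst hn
          have : (4 : ℕ) ∈ F.image P.rk := by rw [hFi]; simp
          simp only [Finset.mem_image] at this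
          obtain ⟨x, hx, hx1⟩ := this
          exact Finset.mem_image.2 ⟨x, Finset.mem_filter.2 ⟨hx, hx1⟩, hx1⟩
      simp only [Finset.mem_coe, Finset.mem_product, hT1, hT4, Finset.mem_filter]
      exact ⟨⟨mem_orderComplex_of_subset P hFo (Finset.filter_subset _ _), him1⟩,
        ⟨mem_orderComplex_of_subset P hFo (Finset.filter_subset _ _), him4⟩⟩
    · intro F hF G hG hFG
      simp only [Finset.mem_coe, hT14, Finset.mem_filter] at hF hG
      simp only [Prod.mk.injEq] at hFG
      have hdF : F = F.filter (fun x => P.rk x = 1) ∪ F.filter (fun x => P.rk x = 4) := by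
        ext x
        simp only [Finset.mem_union, Finset.mem_filter]
        constructor
        · intro hx
          have : P.rk x ∈ F.image P.rk := Finset.mem_image_of_mem _ hx
          rw [hF.2] at this
          simp only [Finset.mem_insert, Finset.mem_singleton] at this
          rcases this with h | h
          · exact Or.inl ⟨hx, h⟩
          · exact Or.inr ⟨hx, h⟩
        · rintro (⟨hx, -⟩ | ⟨hx, -⟩) <;> exact hx
      have hdG : G = G.filter (fun x => P.rk x = 1) ∪ G.filter (fun x => P.rk x = 4) := by
        ext x
        simp only [Finset.mem_union, Finset.mem_filter]
        constructor
        · intro hx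
          have : P.rk x ∈ G.image P.rk := Finset.mem_image_of_mem _ hx
          rw [hG.2] at this
          simp only [Finset.mem_insert, Finset.mem_singleton] at this
          rcases this with h | h
          · exact Or.inl ⟨hx, h⟩
          · exact Or.inr ⟨hx, h⟩
        · rintro (⟨hx, -⟩ | ⟨hx, -⟩) <;> exact hx
      rw [hdF, hdG, hFG.1, hFG.2]
  simpa [Finset.card_product, flagF] using key

lemma pattern_eq (S : Finset ℕ) (hS : S ⊆ Finset.Icc 1 4) :
    S = Finset.filter (· ∈ S) {1, 2, 3, 4} := by
  ext x
  simp only [Finset.mem_filter, Finset.mem_insert, Finset.mem_singleton]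
  constructor
  · intro hx
    have := hS hx
    simp only [Finset.mem_Icc] at this
    exact ⟨by omega, hx⟩
  · exact fun h => h.2
lemma powerset_single (n : ℕ) : ({n} : Finset ℕ).powerset = {∅, {n}} := by
  rw [show ({n} : Finset ℕ) = insert n ∅ from rfl, Finset.powerset_insert]
  simp

lemma flagH_single (P : FinGradedPoset) (n : ℕ) :
    flagH P {n} = (flagF P {n} : ℤ) - flagF P ∅ := by
  rw [flagH, powerset_single]
  rw [Finset.sum_pair (Ne.symm (Finset.singleton_ne_empty n))]
  simp
  ring

lemma flagH_pair (P : FinGradedPoset) :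
    flagH P {1, 4} = (flagF P {1, 4} : ℤ) - flagF P {1} - flagF P {4} + flagF P ∅ := by
  have hp : ({1, 4} : Finset ℕ).powerset = {∅, {1}, {4}, {1, 4}} := by decide
  rw [flagH, hp]
  rw [Finset.sum_insert (by decide), Finset.sum_insert (by decide),
    Finset.sum_insert (by decide), Finset.sum_singleton]
  have c14 : ({1, 4} : Finset ℕ).card = 2 := by decide
  have c1 : ({1} : Finset ℕ).card = 1 := by decide
  have c4 : ({4} : Finset ℕ).card = 1 := by decide
  have c0 : (∅ : Finset ℕ).card = 0 := by decide
  rw [c14, c1, c4, c0]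
  norm_num
  ring
set_option maxHeartbeats 1000000 in
lemma prod_entry (p : ℕ → Bool) (t1 t2 t3 t4 : Bool) :
    (wMat p t1 * (wMat p t2 * (wMat p t3 * wMat p t4))) 0 4 =
      if p 0 = t1 ∧ p 1 = t2 ∧ p 2 = t3 ∧ p 3 = t4 then 1 else 0 := by
  by_cases h1 : p 0 = t1 <;> by_cases h2 : p 1 = t2 <;> by_cases h3 : p 2 = t3 <;>
    by_cases h4 : p 3 = t4 <;>
    simp [wMat, Matrix.mul_apply, Fin.sum_univ_five, h1, h2, h3, h4,
      show ((0:Fin 5):ℕ) = 0 from rfl, show ((1:Fin 5):ℕ) = 1 from rfl,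
      show ((2:Fin 5):ℕ) = 2 from rfl, show ((3:Fin 5):ℕ) = 3 from rfl,
      show ((4:Fin 5):ℕ) = 4 from rfl]
lemma entry_uWord (p : ℕ → Bool) (S : Finset ℕ) :
    (wHom p (uWord 4 S)) 0 4 =
      if p 0 = (decide (1 ∈ S)) ∧ p 1 = (decide (2 ∈ S)) ∧ p 2 = (decide (3 ∈ S)) ∧
          p 3 = (decide (4 ∈ S)) then 1 else 0 := by
  have key : ∀ (c : Prop) [Decidable c],
      (if c then wMat p true else wMat p false) = wMat p (decide c) := by
    intro c _
    by_cases h : c <;> simp [h]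
  rw [wHom_uWord, key, key, key, key, prod_entry]

lemma psi_entry (P : FinGradedPoset) (hr : P.rank = 5) (p : ℕ → Bool) (Sw : Finset ℕ)
    (hSw : Sw ∈ (Finset.Icc 1 4).powerset)
    (hmatch : ∀ S : Finset ℕ, S ⊆ Finset.Icc 1 4 →
      ((p 0 = decide (1 ∈ S) ∧ p 1 = decide (2 ∈ S) ∧ p 2 = decide (3 ∈ S) ∧
        p 3 = decide (4 ∈ S)) ↔ S = Sw)) :
    (wHom p (PsiAB P)) 0 4 = flagH P Sw := by
  have h4 : P.rank - 1 = 4 := by rw [hr]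
  rw [PsiAB, h4, map_sum]
  rw [Matrix.sum_apply]
  have step : ∀ S ∈ (Finset.Icc 1 4).powerset,
      (wHom p (flagH P S • uWord 4 S)) 0 4 = if S = Sw then flagH P S else 0 := by
    intro S hS
    rw [map_smul, Matrix.smul_apply, entry_uWord]
    by_cases h : S = Sw
    · rw [if_pos h, if_pos ((hmatch S (Finset.mem_powerset.1 hS)).2 h)]
      simp
    · rw [if_neg h, if_neg (fun hc => h ((hmatch S (Finset.mem_powerset.1 hS)).1 hc))]
      simp
  rw [Finset.sum_congr rfl step, Finset.sum_ite_eq' _ Sw (fun S => flagH P S), if_pos hSw]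

def pp1 : ℕ → Bool := fun n => n == 0
def pp4 : ℕ → Bool := fun n => n == 3
def pp14 : ℕ → Bool := fun n => n == 0 || n == 3

lemma match1 : ∀ S : Finset ℕ, S ⊆ Finset.Icc 1 4 →
    ((pp1 0 = decide (1 ∈ S) ∧ pp1 1 = decide (2 ∈ S) ∧ pp1 2 = decide (3 ∈ S) ∧
      pp1 3 = decide (4 ∈ S)) ↔ S = {1}) := by
  intro S hS
  constructor
  · rintro ⟨e1, e2, e3, e4⟩
    have h1 : 1 ∈ S := by simpa [pp1] using e1
    have h2 : 2 ∉ S := by simpa [pp1] using e2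
    have h3 : 3 ∉ S := by simpa [pp1] using e3
    have h4 : 4 ∉ S := by simpa [pp1] using e4
    rw [pattern_eq S hS]
    simp [Finset.filter_insert, Finset.filter_singleton, h1, h2, h3, h4]
  · rintro rfl; decide

lemma match4 : ∀ S : Finset ℕ, S ⊆ Finset.Icc 1 4 →
    ((pp4 0 = decide (1 ∈ S) ∧ pp4 1 = decide (2 ∈ S) ∧ pp4 2 = decide (3 ∈ S) ∧
      pp4 3 = decide (4 ∈ S)) ↔ S = {4}) := by
  intro S hS
  constructor
  · rintro ⟨e1, e2, e3, e4⟩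
    have h1 : 1 ∉ S := by simpa [pp4] using e1
    have h2 : 2 ∉ S := by simpa [pp4] using e2
    have h3 : 3 ∉ S := by simpa [pp4] using e3
    have h4 : 4 ∈ S := by simpa [pp4] using e4
    rw [pattern_eq S hS]
    simp [Finset.filter_insert, Finset.filter_singleton, h1, h2, h3, h4]
  · rintro rfl; decide

lemma match14 : ∀ S : Finset ℕ, S ⊆ Finset.Icc 1 4 →
    ((pp14 0 = decide (1 ∈ S) ∧ pp14 1 = decide (2 ∈ S) ∧ pp14 2 = decide (3 ∈ S) ∧
      pp14 3 = decide (4 ∈ S)) ↔ S = {1, 4}) := by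
  intro S hS
  constructor
  · rintro ⟨e1, e2, e3, e4⟩
    have h1 : 1 ∈ S := by simpa [pp14] using e1
    have h2 : 2 ∉ S := by simpa [pp14] using e2
    have h3 : 3 ∉ S := by simpa [pp14] using e3
    have h4 : 4 ∈ S := by simpa [pp14] using e4
    rw [pattern_eq S hS]
    simp [Finset.filter_insert, Finset.filter_singleton, h1, h2, h3, h4]
  · rintro rfl; decide


/-- for a Gorenstein* poset of rank 5, `α13 ≤ α1 · α3`. -/
theorem stmt_9 (P : FinGradedPoset) (hP : IsGorenstein P) (hr : P.rank = 5)
    (α1 α2 α3 α13 : ℕ) (hΦ : IsCdIndex P (cdPoly5 α1 α2 α3 α13)) :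
    α13 ≤ α1 * α3 := by
  have key : ∀ p : ℕ → Bool, (wHom p (cdToAB (cdPoly5 α1 α2 α3 α13))) 0 4 =
      (wHom p (PsiAB P)) 0 4 := fun p => by rw [hΦ]
  -- S = {1}
  have e1 : (1 : ℤ) + α1 = flagH P {1} := by
    have h := key pp1
    rw [wHom_cd, psi_entry P hr pp1 {1} (by decide) match1] at h
    rw [← h]
    simp only [Matrix.add_apply, Matrix.smul_apply]
    rw [show (CM pp1 ^ 4) 0 4 = 1 by decide, show (DM pp1 * CM pp1 ^ 2) 0 4 = 1 by decide,
      show (CM pp1 * DM pp1 * CM pp1) 0 4 = 0 by decide,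
      show (CM pp1 ^ 2 * DM pp1) 0 4 = 0 by decide,
      show (DM pp1 * DM pp1) 0 4 = 0 by decide]
    simp
  have e3 : (1 : ℤ) + α3 = flagH P {4} := by
    have h := key pp4
    rw [wHom_cd, psi_entry P hr pp4 {4} (by decide) match4] at h
    rw [← h]
    simp only [Matrix.add_apply, Matrix.smul_apply]
    rw [show (CM pp4 ^ 4) 0 4 = 1 by decide, show (DM pp4 * CM pp4 ^ 2) 0 4 = 0 by decide,
      show (CM pp4 * DM pp4 * CM pp4) 0 4 = 0 by decide,
      show (CM pp4 ^ 2 * DM pp4) 0 4 = 1 by decide,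
      show (DM pp4 * DM pp4) 0 4 = 0 by decide]
    simp
  have e13 : (1 : ℤ) + α1 + α3 + α13 = flagH P {1, 4} := by
    have h := key pp14
    rw [wHom_cd, psi_entry P hr pp14 {1, 4} (by decide) match14] at h
    rw [← h]
    simp only [Matrix.add_apply, Matrix.smul_apply]
    rw [show (CM pp14 ^ 4) 0 4 = 1 by decide, show (DM pp14 * CM pp14 ^ 2) 0 4 = 1 by decide,
      show (CM pp14 * DM pp14 * CM pp14) 0 4 = 0 by decide,
      show (CM pp14 ^ 2 * DM pp14) 0 4 = 1 by decide,
      show (DM pp14 * DM pp14) 0 4 = 1 by decide]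
    simp
  rw [flagH_single, flagF_empty] at e1 e3
  rw [flagH_pair, flagF_empty] at e13
  have hle : (flagF P {1, 4} : ℤ) ≤ (flagF P {1} : ℤ) * (flagF P {4} : ℤ) := by
    exact_mod_cast flagF_pair_le P
  have hf1 : (flagF P {1} : ℤ) = (α1 : ℤ) + 2 := by push_cast at e1 ⊢; linarith
  have hf4 : (flagF P {4} : ℤ) = (α3 : ℤ) + 2 := by push_cast at e3 ⊢; linarith
  rw [hf1, hf4] at hle
  have hexp : ((α1 : ℤ) + 2) * ((α3 : ℤ) + 2) = (α1 : ℤ) * α3 + 2 * α1 + 2 * α3 + 4 := by ring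
  have final : (α13 : ℤ) ≤ (α1 : ℤ) * (α3 : ℤ) := by push_cast at e13; linarith
  exact_mod_cast final
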